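/- arXiv:1309.7457 — 2 statements merged into one kernel-verified Lean document; each statement's English description precedes it below -/
import Mathlib

section
/- Let f : ℕ → ℕ be nondecreasing with n ≤ f(n) for all n, and suppose f is superpolynomial, i.e. for every k ∈ ℕ the real sequence f(n)/n^k tends to infinity as n → ∞. Then f is not subhomogeneous. -/
open Filter

def Subhomogeneous (f : ℕ → ℕ) : Prop :=
  ∀ c : ℕ, 1 ≤ c → ∃ cbar : ℕ, 1 ≤ cbar ∧ ∀ n : ℕ, 1 ≤ n → f (c * n) ≤ cbar * f n

theorem stmt_1 (f : ℕ → ℕ) (hmono : Monotone f) (hge : ∀ n, n ≤ f n)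
    (hsuper : ∀ k : ℕ, Tendsto (fun n : ℕ => (f n : ℝ) / (n : ℝ) ^ k) atTop atTop) :
    ¬ Subhomogeneous f := by
  intro hsub
  obtain ⟨cbar, hc1, hc⟩ := hsub 2 (by norm_num)
  -- f (2^m) ≤ cbar^m * f 1
  have key : ∀ m : ℕ, f (2 ^ m) ≤ cbar ^ m * f 1 := by
    intro m
    induction m with
    | zero => simp
    | succ m ih =>
      calc f (2 ^ (m + 1)) = f (2 * 2 ^ m) := by ring_nf
        _ ≤ cbar * f (2 ^ m) := hc _ (Nat.one_le_two_pow)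
        _ ≤ cbar * (cbar ^ m * f 1) := Nat.mul_le_mul_left _ ih
        _ = cbar ^ (m + 1) * f 1 := by ring
  -- choose k with cbar ≤ 2^k
  have hck : cbar ≤ 2 ^ cbar := Nat.le_of_lt (Nat.lt_two_pow_self (n := cbar))
  set k := cbar
  have key2 : ∀ m : ℕ, f (2 ^ m) ≤ (2 ^ m) ^ k * f 1 := by
    intro m
    refine (key m).trans (Nat.mul_le_mul_right _ ?_)
    calc cbar ^ m ≤ (2 ^ k) ^ m := Nat.pow_le_pow_left hck m
      _ = (2 ^ m) ^ k := by rw [← pow_mul, ← pow_mul, Nat.mul_comm]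
  -- contradiction with superpolynomiality
  have htend : Tendsto (fun m : ℕ => (f (2 ^ m) : ℝ) / ((2 ^ m : ℕ) : ℝ) ^ k) atTop atTop :=
    (hsuper k).comp (tendsto_pow_atTop_atTop_of_one_lt (α := ℕ) one_lt_two)
  have hbound : ∀ m : ℕ, (f (2 ^ m) : ℝ) / ((2 ^ m : ℕ) : ℝ) ^ k ≤ (f 1 : ℝ) := by
    intro m
    rw [div_le_iff₀ (by positivity)]
    have := key2 m
    calc (f (2 ^ m) : ℝ) ≤ ((2 ^ m) ^ k * f 1 : ℕ) := by exact_mod_cast this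
      _ = (f 1 : ℝ) * ((2 ^ m : ℕ) : ℝ) ^ k := by push_cast; ring
  obtain ⟨m, hm⟩ := (htend.eventually_ge_atTop ((f 1 : ℝ) + 1)).exists
  have := hbound m
  linarith
end

section
/- There exist nondecreasing functions f₁, f₂ : ℕ → ℕ such that f₁ ∈ o(f₂) but the shifted function n ↦ f₁(n+1) is not in o(f₂). (Thus from f₁(n) ∈ o(f₂(n)) it does not in general follow that f₁(n+1) ∈ o(f₂(n)), even for monotone f₁.) -/
open Filter Asymptotics

theorem stmt_18 :
    ∃ f₁ f₂ : ℕ → ℕ, Monotone f₁ ∧ Monotone f₂ ∧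
      (fun n : ℕ => (f₁ n : ℝ)) =o[atTop] (fun n : ℕ => (f₂ n : ℝ)) ∧
      ¬ ((fun n : ℕ => (f₁ (n + 1) : ℝ)) =o[atTop] (fun n : ℕ => (f₂ n : ℝ))) := by
  refine ⟨fun n => (n - 1).factorial, fun n => n.factorial, ?_, ?_, ?_, ?_⟩
  · exact fun a b h => Nat.factorial_le (Nat.sub_le_sub_right h 1)
  · exact fun a b h => Nat.factorial_le h
  · rw [isLittleO_iff_tendsto (fun n h => absurd h (by positivity))]
    have : Tendsto (fun n : ℕ => (1 : ℝ) / n) atTop (nhds 0) :=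
      tendsto_one_div_atTop_nhds_zero_nat
    refine this.congr' ?_
    filter_upwards [eventually_ge_atTop 1] with n hn
    rw [← Nat.mul_factorial_pred (Nat.one_le_iff_ne_zero.mp hn)]
    push_cast
    rw [div_eq_div_iff (by positivity) (by positivity)]
    ring
  · intro h
    have h2 : (fun n : ℕ => ((n.factorial : ℝ))) =o[atTop]
        (fun n : ℕ => (n.factorial : ℝ)) := by
      refine h.congr' ?_ (by rfl)
      filter_upwards with n
      simp
    have hfreq : ∃ᶠ n : ℕ in atTop, (n.factorial : ℝ) ≠ 0 :=
      Eventually.frequently (by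
        filter_upwards with n using Nat.cast_ne_zero.mpr n.factorial_ne_zero)
    exact (isLittleO_irrefl hfreq) h2
end
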